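/- arXiv:2110.06081 — 7 statements merged into one kernel-verified Lean document; each statement's English description precedes it below -/
import Mathlib

section
/- Let x_0 < x_1 < ⋯ < x_n be real numbers and let s_0, …, s_{n−1} be real polynomials satisfying s_{i−1}(x_i) = s_i(x_i) for i = 1, …, n−1. Set s_{−1} := 0 and define R_i(x) = s_i(ReLU(x − x_i) + x_i) − s_{i−1}(ReLU(x − x_i) + x_i) for i = 0, …, n−1. Then for every x ∈ [x_0, x_n], the sum Σ_{i=0}^{n−1} R_i(x) equals S(x), the polynomial spline with knots x_0, …, x_n and pieces s_0, …, s_{n−1}. -/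
/-- ReLU: the rectified linear unit. -/
noncomputable def relu (z : ℝ) : ℝ := max z 0

/-- The function `R_i(x) = s_i(ReLU(x − x_i) + x_i) − s_{i−1}(ReLU(x − x_i) + x_i)`,
with the convention `s_{−1} = 0`. -/
noncomputable def Rpiece {n : ℕ} (knot : Fin (n + 1) → ℝ) (s : Fin n → Polynomial ℝ)
    (i : Fin n) (y : ℝ) : ℝ :=
  (s i).eval (relu (y - knot i.castSucc) + knot i.castSucc) -
    (if _ : (i : ℕ) = 0 then (0 : Polynomial ℝ)
      else s ⟨(i : ℕ) - 1, lt_of_le_of_lt (Nat.sub_le _ _) i.isLt⟩).eval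
      (relu (y - knot i.castSucc) + knot i.castSucc)

lemma relu_add_max (y a : ℝ) : relu (y - a) + a = max y a := by
  rcases le_total y a with h | h
  · simp [relu, sub_nonpos.mpr h, max_eq_right h]
  · simp [relu, sub_nonneg.mpr h, max_eq_left h]

lemma key (n : ℕ) (knot : Fin (n + 1) → ℝ) (hmono : StrictMono knot)
    (s : Fin n → Polynomial ℝ)
    (hmatch : ∀ i : Fin n, ∀ hi : (i : ℕ) + 1 < n,
      (s i).eval (knot i.succ) = (s ⟨(i : ℕ) + 1, hi⟩).eval (knot i.succ))
    (i : Fin n) (y : ℝ) (h1 : knot i.castSucc ≤ y) (h2 : y ≤ knot i.succ) :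
    ∑ j, Rpiece knot s j y = (s i).eval y := by
  set F : ℕ → ℝ := fun k => if h : 0 < k ∧ k ≤ n then (s ⟨k - 1, by omega⟩).eval y else 0
    with hF
  have hsum : ∑ j, Rpiece knot s j y
      = ∑ k ∈ Finset.range n, (if h : k < n then Rpiece knot s ⟨k, h⟩ y else 0) := by
    rw [← Fin.sum_univ_eq_sum_range]
    exact Finset.sum_congr rfl fun j _ => by simp [j.isLt]
  rw [hsum, ← Finset.sum_range_add_sum_Ico _ (Nat.succ_le_of_lt i.isLt)]
  have hzero : ∑ k ∈ Finset.Ico ((i : ℕ) + 1) n,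
      (if h : k < n then Rpiece knot s ⟨k, h⟩ y else 0) = 0 := by
    apply Finset.sum_eq_zero
    intro k hk
    rw [Finset.mem_Ico] at hk
    rw [dif_pos hk.2]
    have hk1 : 0 < k := by omega
    have hy : y ≤ knot (⟨k, hk.2⟩ : Fin n).castSucc := by
      refine h2.trans (hmono.monotone ?_)
      simp [Fin.le_def]; omega
    have harg : relu (y - knot (⟨k, hk.2⟩ : Fin n).castSucc) + knot (⟨k, hk.2⟩ : Fin n).castSucc
        = knot (⟨k, hk.2⟩ : Fin n).castSucc := by
      rw [relu_add_max, max_eq_right hy]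
    rw [Rpiece, harg, dif_neg (by omega : ¬ k = 0)]
    have := hmatch ⟨k - 1, by omega⟩ (by omega : (k - 1) + 1 < n)
    have he : (⟨k - 1, by omega⟩ : Fin n).succ = (⟨k, hk.2⟩ : Fin n).castSucc := by
      simp [Fin.ext_iff]; omega
    rw [he] at this
    have he2 : (⟨(k - 1) + 1, by omega⟩ : Fin n) = ⟨k, hk.2⟩ := by simp [Fin.ext_iff]; omega
    rw [he2] at this
    rw [← this]; ring
  rw [hzero, add_zero]
  have hF0 : F 0 = 0 := by simp [hF]
  have hFv : ∀ m (hm : m < n), F (m + 1) = (s ⟨m, hm⟩).eval y := by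
    intro m hm
    simp only [hF]
    rw [dif_pos ⟨Nat.succ_pos m, hm⟩]
    rfl
  have hmain : ∑ k ∈ Finset.range ((i : ℕ) + 1),
      (if h : k < n then Rpiece knot s ⟨k, h⟩ y else 0) =
      ∑ k ∈ Finset.range ((i : ℕ) + 1), (F (k + 1) - F k) := by
    apply Finset.sum_congr rfl
    intro k hk
    rw [Finset.mem_range] at hk
    have hkn : k < n := lt_of_lt_of_le hk (Nat.succ_le_of_lt i.isLt)
    rw [dif_pos hkn]
    have hy : knot (⟨k, hkn⟩ : Fin n).castSucc ≤ y := by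
      refine le_trans (hmono.monotone ?_) h1
      simp [Fin.le_def]; omega
    have harg : relu (y - knot (⟨k, hkn⟩ : Fin n).castSucc) + knot (⟨k, hkn⟩ : Fin n).castSucc
        = y := by rw [relu_add_max, max_eq_left hy]
    rw [Rpiece, harg, hFv k hkn]
    rcases Nat.eq_zero_or_pos k with rfl | hk0
    · rw [dif_pos rfl, hF0]
      simp
    · rw [dif_neg (show ¬ ((⟨k, hkn⟩ : Fin n) : ℕ) = 0 by simp only [Fin.val_mk]; omega)]
      have hFk : F k = (s ⟨k - 1, by omega⟩).eval y := by
        have := hFv (k - 1) (by omega)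
        rwa [Nat.sub_add_cancel hk0] at this
      rw [hFk]
  rw [hmain, Finset.sum_range_sub F, hF0, sub_zero, hFv (i : ℕ) i.isLt]

/-- for knots `x_0 < ⋯ < x_n` and pieces `s_0, …, s_{n−1}` with
`s_{i−1}(x_i) = s_i(x_i)` (1 ≤ i ≤ n−1), the sum `Σ_{i=0}^{n−1} R_i(x)` equals the
polynomial spline `S(x)` for every `x ∈ [x_0, x_n]`, i.e. it equals `s_i(x)` on
`[x_i, x_{i+1})` and `s_{n−1}(x_n)` at `x_n`. -/
theorem stmt1 (n : ℕ) (hn : 0 < n) (knot : Fin (n + 1) → ℝ) (hmono : StrictMono knot)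
    (s : Fin n → Polynomial ℝ)
    (hmatch : ∀ i : Fin n, ∀ hi : (i : ℕ) + 1 < n,
      (s i).eval (knot i.succ) = (s ⟨(i : ℕ) + 1, hi⟩).eval (knot i.succ)) :
    ∀ y ∈ Set.Icc (knot 0) (knot (Fin.last n)),
      (∀ i : Fin n, y ∈ Set.Ico (knot i.castSucc) (knot i.succ) →
        ∑ j, Rpiece knot s j y = (s i).eval y) ∧
      (y = knot (Fin.last n) →
        ∑ j, Rpiece knot s j y = (s ⟨n - 1, Nat.sub_lt hn Nat.one_pos⟩).eval y) := by
  intro y hy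
  constructor
  · intro i hi
    exact key n knot hmono s hmatch i y hi.1 hi.2.le
  · intro hy'
    set i : Fin n := ⟨n - 1, Nat.sub_lt hn Nat.one_pos⟩
    have hsucc : i.succ = Fin.last n := by simp [Fin.ext_iff, i]; omega
    apply key n knot hmono s hmatch i y
    · exact hy'.symm ▸ hmono.monotone (by simp only [Fin.le_def, Fin.coe_castSucc, Fin.val_last, Fin.val_mk]; omega)
    · rw [hy', ← hsucc]
end

section
/- For every real polynomial p in one variable, there exist a depth H, an architecture (d_0, d_1, …, d_H) with d_0 = d_H = 1, and quadratic layers q_1, …, q_H such that the quadratic network with ReLU activation q_H ∘ σ ∘ q_{H−1} ∘ σ ∘ ⋯ ∘ σ ∘ q_1 : ℝ → ℝ equals p(x) for every x ∈ ℝ. -/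
/-- Componentwise ReLU. -/
noncomputable def reluVec {n : ℕ} (v : Fin n → ℝ) : Fin n → ℝ := fun i => max (v i) 0

/-- A quadratic layer
`q(x) = (W^r x + b^r) ⊙ (W^g x + b^g) + W^b (x ⊙ x) + c`. -/
def quadLayer {m d : ℕ} (Wr Wg Wb : Matrix (Fin d) (Fin m) ℝ)
    (br bg c : Fin d → ℝ) (x : Fin m → ℝ) : Fin d → ℝ :=
  fun i => (Wr.mulVec x i + br i) * (Wg.mulVec x i + bg i)
    + Wb.mulVec (fun j => x j * x j) i + c i

/-- Functions computed by quadratic networks with ReLU activation,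
`q_H ∘ σ ∘ q_{H−1} ∘ σ ∘ ⋯ ∘ σ ∘ q_1` (σ the componentwise ReLU). -/
inductive IsQNNReLU : {m d : ℕ} → ((Fin m → ℝ) → (Fin d → ℝ)) → Prop
  | single {m d : ℕ} (Wr Wg Wb : Matrix (Fin d) (Fin m) ℝ) (br bg c : Fin d → ℝ) :
      IsQNNReLU (quadLayer Wr Wg Wb br bg c)
  | comp {m k d : ℕ} (Wr Wg Wb : Matrix (Fin d) (Fin k) ℝ) (br bg c : Fin d → ℝ)
      {g : (Fin m → ℝ) → (Fin k → ℝ)} (hg : IsQNNReLU g) :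
      IsQNNReLU (fun x => quadLayer Wr Wg Wb br bg c (reluVec (g x)))

/-- `f : ℝ → ℝ` is computed by a quadratic network with ReLU activation
(with input and output dimensions 1). -/
def IsQNNReLUFun (f : ℝ → ℝ) : Prop :=
  ∃ g : (Fin 1 → ℝ) → (Fin 1 → ℝ), IsQNNReLU g ∧ ∀ x : ℝ, f x = g (fun _ => x) 0

lemma relu_diff (t : ℝ) : max t 0 - max (-t) 0 = t := max_zero_sub_max_neg_zero_eq_self t

lemma key_s4 : ∀ n : ℕ, ∀ p : Polynomial ℝ, p.natDegree ≤ n →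
    ∃ g : (Fin 1 → ℝ) → (Fin 4 → ℝ), IsQNNReLU g ∧
      ∀ x : ℝ, g (fun _ => x) = ![x, -x, p.eval x, -(p.eval x)] := by
  intro n
  induction n with
  | zero =>
    intro p hp
    obtain ⟨a, rfl⟩ := Polynomial.natDegree_eq_zero.mp (Nat.le_zero.mp hp)
    refine ⟨_, IsQNNReLU.single ![![1],![-1],![0],![0]] 0 0 0 ![1,1,0,0] ![0,0,a,-a], ?_⟩
    intro x
    funext i
    fin_cases i <;>
      simp [quadLayer, Matrix.mulVec, dotProduct, Fin.sum_univ_succ]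
  | succ n ih =>
    intro p hp
    obtain ⟨g, hg, hval⟩ := ih p.divX (by
      have := Polynomial.natDegree_divX_eq_natDegree_tsub_one (p := p)
      omega)
    set a := p.coeff 0
    refine ⟨_, IsQNNReLU.comp
      ![![1,-1,0,0],![-1,1,0,0],![1,-1,0,0],![1,-1,0,0]]
      ![![0,0,0,0],![0,0,0,0],![0,0,1,-1],![0,0,-1,1]]
      0 0 ![1,1,0,0] ![0,0,a,-a] hg, ?_⟩
    intro x
    have hp' : p.eval x = a + x * (p.divX.eval x) := by
      conv_lhs => rw [← Polynomial.divX_mul_X_add p]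
      simp [a]; ring
    have hx : ∀ t : ℝ, max t 0 - max (-t) 0 = t := relu_diff
    have e1 : ((-x) ⊔ 0 : ℝ) = x ⊔ 0 - x := by have := hx x; linarith
    have e2 : ((-(p.divX.eval x)) ⊔ 0 : ℝ) = (p.divX.eval x) ⊔ 0 - p.divX.eval x := by
      have := hx (p.divX.eval x); linarith
    funext i
    rw [hval x]
    fin_cases i <;>
      simp [quadLayer, reluVec, Matrix.mulVec, dotProduct, Fin.sum_univ_four,
        Matrix.vecHead, Matrix.vecTail, hp', e1, e2] <;> ring

/-- every real univariate polynomial is exactly represented, on all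
of ℝ, by some quadratic network with ReLU activation. -/
theorem stmt4 (p : Polynomial ℝ) :
    ∃ f : ℝ → ℝ, IsQNNReLUFun f ∧ ∀ x : ℝ, f x = p.eval x := by
  obtain ⟨g, hg, hval⟩ := key_s4 p.natDegree p le_rfl
  refine ⟨fun x => p.eval x, ⟨fun x => quadLayer ![![0,0,1,-1]] 0 0 0 (fun _ => 1) 0 (reluVec (g x)),
    IsQNNReLU.comp _ _ _ _ _ _ hg, ?_⟩, fun _ => rfl⟩
  intro x
  have hx : ∀ t : ℝ, max t 0 - max (-t) 0 = t := relu_diff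
  show p.eval x = quadLayer ![![0,0,1,-1]] 0 0 0 (fun _ => 1) 0 (reluVec (g (fun _ => x))) 0
  rw [hval x]
  simp [quadLayer, reluVec, Matrix.mulVec, dotProduct, Fin.sum_univ_four,
    Matrix.vecHead, Matrix.vecTail]
  have := hx (p.eval x); linarith
end

section
/- (Universal Spline Approximation, positive part of Proposition 1.) Let S be the polynomial spline with knots x_0 < x_1 < ⋯ < x_n and pieces s_0, …, s_{n−1}. Then there exists a quadratic network with ReLU activation whose computed function Q : ℝ → ℝ satisfies Q(x) = S(x) for all x ∈ [x_0, x_n]. -/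
/-- A vector function realizable (on `K`) by a quadratic ReLU network. -/
def NetOn (K : Set ℝ) {d : ℕ} (F : ℝ → Fin d → ℝ) : Prop :=
  ∃ g : (Fin 1 → ℝ) → (Fin d → ℝ), IsQNNReLU g ∧ ∀ x ∈ K, ∀ i, g (fun _ => x) i = F x i

lemma NetOn.congr {K : Set ℝ} {d : ℕ} {F G : ℝ → Fin d → ℝ} (h : NetOn K F)
    (hFG : ∀ x ∈ K, ∀ i, F x i = G x i) : NetOn K G := by
  obtain ⟨g, hg, he⟩ := h
  exact ⟨g, hg, fun x hx i => (he x hx i).trans (hFG x hx i)⟩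

lemma NetOn.base {K : Set ℝ} {d : ℕ} (wr wg br bg c : Fin d → ℝ) :
    NetOn K (fun x i => (wr i * x + br i) * (wg i * x + bg i) + c i) := by
  refine ⟨quadLayer (Matrix.of fun i _ => wr i) (Matrix.of fun i _ => wg i) 0 br bg c,
    IsQNNReLU.single _ _ _ _ _ _, ?_⟩
  intro x hx i
  simp [quadLayer, Matrix.mulVec, dotProduct, Fin.sum_univ_one]

lemma NetOn.step {K : Set ℝ} {k d : ℕ} {F : ℝ → Fin k → ℝ} (h : NetOn K F)
    (Wr Wg : Fin d → Fin k → ℝ) (br bg c : Fin d → ℝ) :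
    NetOn K (fun x i =>
      ((∑ j, Wr i j * max (F x j) 0) + br i) * ((∑ j, Wg i j * max (F x j) 0) + bg i) + c i) := by
  obtain ⟨g, hg, he⟩ := h
  refine ⟨_, IsQNNReLU.comp (Matrix.of Wr) (Matrix.of Wg) 0 br bg c hg, ?_⟩
  intro x hx i
  have hrel : reluVec (g (fun _ => x)) = fun j => max (F x j) 0 := by
    funext j; rw [reluVec]; rw [he x hx j]
  simp [quadLayer, hrel, Matrix.mulVec, dotProduct]

lemma exists_shift {K : Set ℝ} (hK : IsCompact K) {f : ℝ → ℝ} (hf : Continuous f) :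
    ∃ C : ℝ, ∀ x ∈ K, 0 ≤ f x + C := by
  obtain ⟨C, hC⟩ := hK.exists_bound_of_continuousOn hf.continuousOn
  exact ⟨C, fun x hx => by have := hC x hx; rw [Real.norm_eq_abs] at this; linarith [abs_le.1 this |>.1]⟩

open Polynomial Finset in
lemma horner_rec (p : Polynomial ℝ) (D k : ℕ) (hk : k ≤ D) (x : ℝ) :
    ∑ j ∈ range (D + 1 - k), p.coeff (k + j) * x ^ j
      = (∑ j ∈ range (D + 1 - (k + 1)), p.coeff (k + 1 + j) * x ^ j) * x + p.coeff k := by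
  have h1 : D + 1 - k = (D - k) + 1 := by omega
  have h2 : D + 1 - (k + 1) = D - k := by omega
  rw [h1, h2, Finset.sum_range_succ']
  rw [Finset.sum_mul]
  simp only [pow_zero, mul_one, add_zero]
  congr 1
  refine Finset.sum_congr rfl fun j _ => ?_
  rw [show k + (j + 1) = k + 1 + j by omega]
  ring

open Polynomial Finset in
lemma horner_zero (p : Polynomial ℝ) (D : ℕ) (h : p.natDegree ≤ D) (x : ℝ) :
    ∑ j ∈ range (D + 1 - 0), p.coeff (0 + j) * x ^ j = p.eval x := by
  simp only [Nat.sub_zero, Nat.zero_add]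
  rw [Polynomial.eval_eq_sum_range' (Nat.lt_succ_of_le h)]

open Polynomial Finset

/-- positive part of Proposition 1: for any polynomial spline `S`
with knots `x_0 < ⋯ < x_n` and pieces `s_0, …, s_{n−1}` (matching at the interior
knots), there is a quadratic network with ReLU activation whose computed function
`Q : ℝ → ℝ` satisfies `Q(x) = S(x)` for all `x ∈ [x_0, x_n]`, i.e. `Q = s_i` on
`[x_i, x_{i+1})` and `Q(x_n) = s_{n−1}(x_n)`. -/
theorem stmt5 (n : ℕ) (hn : 0 < n) (knot : Fin (n + 1) → ℝ) (hmono : StrictMono knot)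
    (s : Fin n → Polynomial ℝ)
    (hmatch : ∀ i : Fin n, ∀ hi : (i : ℕ) + 1 < n,
      (s i).eval (knot i.succ) = (s ⟨(i : ℕ) + 1, hi⟩).eval (knot i.succ)) :
    ∃ Q : ℝ → ℝ, IsQNNReLUFun Q ∧
      (∀ i : Fin n, ∀ y ∈ Set.Ico (knot i.castSucc) (knot i.succ),
        Q y = (s i).eval y) ∧
      Q (knot (Fin.last n))
        = (s ⟨n - 1, Nat.sub_lt hn Nat.one_pos⟩).eval (knot (Fin.last n)) := by
  classical
  set x0 : ℝ := knot 0 with hx0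
  set xN : ℝ := knot (Fin.last n) with hxN
  set K : Set ℝ := Set.Icc x0 xN with hKdef
  have hK : IsCompact K := isCompact_Icc
  -- knots as a ℕ-indexed family
  set kn : ℕ → ℝ := fun j => if h : j ≤ n then knot ⟨j, Nat.lt_succ_of_le h⟩ else 0 with hkn
  have hkn_eq : ∀ j (h : j ≤ n), kn j = knot ⟨j, Nat.lt_succ_of_le h⟩ := by
    intro j h; simp [hkn, h]
  have hkn0 : kn 0 = x0 := by rw [hkn_eq 0 (Nat.zero_le n)]; rfl
  have hknN : kn n = xN := by rw [hkn_eq n le_rfl]; rfl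
  have hkn_mono : ∀ a b, a ≤ b → b ≤ n → kn a ≤ kn b := by
    intro a b hab hb
    rw [hkn_eq a (hab.trans hb), hkn_eq b hb]
    exact (hmono.le_iff_le).2 (by exact hab)
  have hkn_lt : ∀ a b, a < b → b ≤ n → kn a < kn b := by
    intro a b hab hb
    rw [hkn_eq a ((le_of_lt hab).trans hb), hkn_eq b hb]
    exact hmono (by exact hab)
  -- pieces as a ℕ-indexed family
  set ss : ℕ → Polynomial ℝ := fun i => if h : i < n then s ⟨i, h⟩ else 0 with hss
  have hss_eq : ∀ i (h : i < n), ss i = s ⟨i, h⟩ := by intro i h; simp [hss, h]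
  -- the difference polynomials factor through (X - knot j)
  have hfac : ∀ j, ∃ q : Polynomial ℝ, 1 ≤ j → j < n →
      ss j - ss (j - 1) = (X - C (kn j)) * q := by
    intro j
    by_cases hj : 1 ≤ j ∧ j < n
    · obtain ⟨hj1, hj2⟩ := hj
      have hj1n : j - 1 < n := by omega
      have hroot : (ss j - ss (j - 1)).IsRoot (kn j) := by
        have hlt : j - 1 + 1 < n := by omega
        have h2 := hmatch ⟨j - 1, hj1n⟩ hlt
        have e1 : ss j = s ⟨j, hj2⟩ := hss_eq j hj2
        have e2 : ss (j - 1) = s ⟨j - 1, hj1n⟩ := hss_eq (j-1) hj1n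
        have i1 : (⟨j, hj2⟩ : Fin n) = ⟨j - 1 + 1, hlt⟩ := Fin.mk_eq_mk.mpr (by omega)
        have i2 : kn j = knot (Fin.succ ⟨j - 1, hj1n⟩) := by
          rw [hkn_eq j (le_of_lt hj2)]
          congr 1
          exact Fin.ext (by simp [Fin.succ]; omega)
        simp only [Polynomial.IsRoot, Polynomial.eval_sub, e1, e2, i1, i2]
        rw [sub_eq_zero]
        exact h2.symm
      obtain ⟨q, hq⟩ := (Polynomial.dvd_iff_isRoot.2 hroot)
      exact ⟨q, fun _ _ => hq⟩
    · exact ⟨0, fun h1 h2 => absurd ⟨h1, h2⟩ hj⟩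
  choose ee hee using hfac
  -- the polynomials evaluated by the network
  set Pn : Fin n → Polynomial ℝ := fun i => if (i : ℕ) = 0 then ss 0 else ee (i : ℕ) with hPn
  set D : ℕ := Finset.univ.sup fun i : Fin n => (Pn i).natDegree with hD
  have hDle : ∀ i : Fin n, (Pn i).natDegree ≤ D := fun i => Finset.le_sup (f := fun i : Fin n => (Pn i).natDegree) (Finset.mem_univ i)
  -- Horner values
  set Hv : ℕ → Fin n → ℝ → ℝ :=
    fun k i x => ∑ j ∈ Finset.range (D + 1 - k), (Pn i).coeff (k + j) * x ^ j with hHv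
  have hHv_cont : ∀ k i, Continuous (fun x => Hv k i x) := by
    intro k i
    apply continuous_finset_sum
    exact fun j _ => continuous_const.mul (continuous_pow j)
  -- main induction: realize the Horner state
  have main : ∀ m : ℕ, m ≤ D + 1 → ∃ C : Fin n → ℝ,
      (∀ i : Fin n, ∀ x ∈ K, 0 ≤ Hv (D + 1 - m) i x + C i) ∧
      NetOn K (fun x => Fin.cons (x - x0) (fun i => Hv (D + 1 - m) i x + C i)) := by
    intro m
    induction m with
    | zero =>
      intro _
      refine ⟨0, ?_, ?_⟩
      · intro i x hx
        simp [hHv, Nat.sub_self]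
      · have := NetOn.base (K := K) (d := n + 1)
          (Fin.cons 1 0) 0 (Fin.cons (-x0) 0) 1 0
        refine this.congr ?_
        intro x hx i
        refine Fin.cases ?_ (fun i => ?_) i <;>
          simp [hHv, Nat.sub_self]
        ring
    | succ m ih =>
      intro hm1
      obtain ⟨C', hC'pos, hC'net⟩ := ih (Nat.le_of_succ_le hm1)
      set k : ℕ := D + 1 - (m + 1) with hkdef
      have hk1 : D + 1 - m = k + 1 := by omega
      have hkD : k ≤ D := by omega
      have hex : ∀ i : Fin n, ∃ Ci : ℝ, ∀ x ∈ K, 0 ≤ Hv k i x + Ci :=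
        fun i => exists_shift hK (hHv_cont k i)
      choose C hC using hex
      refine ⟨C, fun i x hx => hC i x hx, ?_⟩
      rw [hk1] at hC'net hC'pos
      have hstep := hC'net.step
        (fun i' j => if j = i' then 1 else 0)
        (fun i' j => Fin.cases (0 : ℝ) (fun _ => if j = 0 then 1 else 0) i')
        (Fin.cons 0 (fun i => -C' i))
        (Fin.cons 1 (fun _ => x0))
        (Fin.cons 0 (fun i => (Pn i).coeff k + C i))
      refine hstep.congr ?_
      intro x hx i
      have hxge : x0 ≤ x := hx.1
      have hmax0 : max (x - x0) 0 = x - x0 := max_eq_left (by linarith)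
      have hmaxS : ∀ i : Fin n, max (Hv (k+1) i x + C' i) 0 = Hv (k+1) i x + C' i :=
        fun i => max_eq_left (hC'pos i x hx)
      refine Fin.cases ?_ (fun i => ?_) i
      · simp [Finset.sum_ite_eq', ite_mul, hmax0]
      · simp only [Fin.cases_succ, Fin.cons_succ, Fin.cons_zero, ite_mul, one_mul, zero_mul,
          Finset.sum_ite_eq', Finset.mem_univ, if_true, hmaxS, hmax0]
        have hr := horner_rec (Pn i) D k hkD x
        simp only [hHv]
        rw [hr]
        ring
  obtain ⟨C, hCpos, hCnet⟩ := main (D + 1) le_rfl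
  have hHv0 : ∀ (i : Fin n) (x : ℝ), Hv 0 i x = (Pn i).eval x := by
    intro i x
    rw [hHv]
    exact horner_zero (Pn i) D (hDle i) x
  have hnet0 : NetOn K (fun x => Fin.cons (x - x0) (fun i => (Pn i).eval x + C i)) := by
    refine hCnet.congr ?_
    intro x hx i
    refine Fin.cases rfl (fun i => ?_) i
    simp [Nat.sub_self, hHv0]
  have hpos0 : ∀ i : Fin n, ∀ x ∈ K, 0 ≤ (Pn i).eval x + C i := by
    intro i x hx
    have := hCpos i x hx
    rw [Nat.sub_self] at this
    rwa [hHv0] at this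
  -- layer creating (x - kn j) pre-activations alongside the polynomial values
  have hnet1 : NetOn K (fun x (j : Fin (n + n)) =>
      if h : (j : ℕ) < n then x - kn (j : ℕ)
      else (Pn ⟨(j : ℕ) - n, by have := j.isLt; omega⟩).eval x
            + C ⟨(j : ℕ) - n, by have := j.isLt; omega⟩) := by
    have hstep := hnet0.step
      (fun (j : Fin (n + n)) (j' : Fin (n + 1)) =>
        if j' = (if h : (j : ℕ) < n then 0
                 else Fin.succ ⟨(j : ℕ) - n, by have := j.isLt; omega⟩) then 1 else 0)
      (fun _ _ => 0)
      (fun j => if (j : ℕ) < n then x0 - kn (j : ℕ) else 0)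
      (fun _ => 1) (fun _ => 0)
    refine hstep.congr ?_
    intro x hx j
    have hxge : x0 ≤ x := hx.1
    by_cases h : (j : ℕ) < n
    · simp only [h, dif_pos, if_pos, ite_mul, one_mul, zero_mul,
        Finset.sum_ite_eq', Finset.mem_univ, if_true, Fin.cons_zero, Finset.sum_const_zero]
      rw [max_eq_left (by linarith)]
      ring
    · simp only [h, dif_neg, not_false_iff, if_neg, ite_mul, one_mul, zero_mul,
        Finset.sum_ite_eq', Finset.mem_univ, if_true, Fin.cons_succ, Finset.sum_const_zero]
      rw [max_eq_left (hpos0 _ x hx)]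
      ring
  -- products layer
  have hex2 : ∀ i : Fin n, ∃ Ci : ℝ, ∀ x ∈ K, 0 ≤ max (x - kn (i : ℕ)) 0 * (Pn i).eval x + Ci := by
    intro i
    refine exists_shift hK ?_
    exact ((continuous_id.sub continuous_const).max continuous_const).mul (Pn i).continuous
  choose C2 hC2 using hex2
  have hnet2 : NetOn K (fun x (i : Fin n) =>
      if (i : ℕ) = 0 then (Pn i).eval x + C i
      else max (x - kn (i : ℕ)) 0 * (Pn i).eval x + C2 i) := by
    have hstep := hnet1.step
      (fun (i : Fin n) (j : Fin (n + n)) =>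
        if j = (if (i : ℕ) = 0 then Fin.natAdd n i else Fin.castAdd n i) then 1 else 0)
      (fun (i : Fin n) (j : Fin (n + n)) =>
        if (i : ℕ) = 0 then 0 else if j = Fin.natAdd n i then 1 else 0)
      (fun i => 0)
      (fun i => if (i : ℕ) = 0 then 1 else -C i)
      (fun i => if (i : ℕ) = 0 then 0 else C2 i)
    refine hstep.congr ?_
    intro x hx i
    have hna : ¬ ((Fin.natAdd n i : ℕ) < n) := by simp [Fin.natAdd]
    have hca : ((Fin.castAdd n i : ℕ) < n) := by simp [Fin.castAdd, Fin.castLE]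
    have hidx : (⟨(Fin.natAdd n i : ℕ) - n, by have := (Fin.natAdd n i).isLt; omega⟩ : Fin n) = i := by
      apply Fin.ext
      simp [Fin.natAdd]
    by_cases h : (i : ℕ) = 0
    · simp only [h, if_pos, ite_mul, one_mul, zero_mul,
        Finset.sum_ite_eq', Finset.mem_univ, if_true, Finset.sum_const_zero]
      rw [dif_neg hna]
      simp only [hidx]
      rw [max_eq_left (hpos0 i x hx)]
      ring
    · simp only [h, if_neg, not_false_iff, ite_mul, one_mul, zero_mul,
        Finset.sum_ite_eq', Finset.mem_univ, if_true, Finset.sum_const_zero]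
      rw [dif_neg hna, dif_pos hca]
      simp only [hidx]
      have hcav : ((Fin.castAdd n i : ℕ)) = (i : ℕ) := rfl
      rw [hcav, max_eq_left (hpos0 i x hx)]
      ring
  -- output layer
  have hnet3 : NetOn K (fun x (_ : Fin 1) =>
      ∑ i : Fin n, (if (i : ℕ) = 0 then (Pn i).eval x
        else max (x - kn (i : ℕ)) 0 * (Pn i).eval x)) := by
    have hstep := hnet2.step (d := 1) (fun _ _ => (1 : ℝ)) (fun _ _ => (0 : ℝ))
      (fun _ => -(∑ i : Fin n, if (i : ℕ) = 0 then C i else C2 i))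
      (fun _ => (1 : ℝ)) (fun _ => (0 : ℝ))
    refine hstep.congr ?_
    intro x hx j
    have hmax : ∀ i : Fin n,
        max (if (i : ℕ) = 0 then (Pn i).eval x + C i
             else max (x - kn (i : ℕ)) 0 * (Pn i).eval x + C2 i) 0
        = (if (i : ℕ) = 0 then (Pn i).eval x else max (x - kn (i : ℕ)) 0 * (Pn i).eval x)
          + (if (i : ℕ) = 0 then C i else C2 i) := by
      intro i
      by_cases h : (i : ℕ) = 0
      · simp only [h, if_pos]
        exact max_eq_left (hpos0 i x hx)
      · simp only [h, if_neg, not_false_iff]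
        exact max_eq_left (hC2 i x hx)
    simp only [one_mul, zero_mul, Finset.sum_const_zero, hmax, Finset.sum_add_distrib]
    ring
  obtain ⟨g, hg, hge⟩ := hnet3
  have hge0 : ∀ y ∈ K, g (fun _ => y) 0 = ∑ j ∈ Finset.range n,
      (if j = 0 then (ss 0).eval y else max (y - kn j) 0 * (ee j).eval y) := by
    intro y hy
    rw [hge y hy 0]
    rw [← Fin.sum_univ_eq_sum_range
      (fun j => if j = 0 then (ss 0).eval y else max (y - kn j) 0 * (ee j).eval y) n]
    refine Finset.sum_congr rfl fun i _ => ?_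
    by_cases h : (i : ℕ) = 0
    · simp [h, hPn]
    · simp [h, hPn]
  have tele : ∀ i, i < n → ∀ y : ℝ,
      (ss 0).eval y + ∑ j ∈ Finset.range i, (y - kn (j + 1)) * (ee (j + 1)).eval y
        = (ss i).eval y := by
    intro i
    induction i with
    | zero => intro _ y; simp
    | succ i ih =>
      intro hi y
      rw [Finset.sum_range_succ, ← add_assoc, ih (by omega) y]
      have hd := hee (i + 1) (by omega) hi
      have h2 : (ss (i + 1)).eval y - (ss i).eval y
          = (y - kn (i + 1)) * (ee (i + 1)).eval y := by
        have h3 := congrArg (Polynomial.eval y) hd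
        simp only [Nat.add_sub_cancel] at h3
        simpa using h3
      linarith
  refine ⟨fun x => g (fun _ => x) 0, ⟨g, hg, fun x => rfl⟩, ?_, ?_⟩
  · -- equality on each piece
    intro i y hy
    obtain ⟨hy1, hy2⟩ := hy
    have hiv : (i : ℕ) < n := i.isLt
    have hcs : kn (i : ℕ) = knot i.castSucc := by
      rw [hkn_eq _ (le_of_lt hiv)]
      rfl
    have hsc : kn ((i : ℕ) + 1) = knot i.succ := by
      rw [hkn_eq _ hiv]
      rfl
    have hyK : y ∈ K := by
      constructor
      · calc x0 = kn 0 := hkn0.symm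
          _ ≤ kn (i : ℕ) := hkn_mono 0 _ (Nat.zero_le _) (le_of_lt hiv)
          _ ≤ y := hcs ▸ hy1
      · calc y ≤ kn ((i : ℕ) + 1) := le_of_lt (hsc ▸ hy2)
          _ ≤ kn n := hkn_mono _ n hiv le_rfl
          _ = xN := hknN
    show g (fun _ => y) 0 = (s i).eval y
    rw [hge0 y hyK]
    rw [← Finset.sum_range_add_sum_Ico _ (show (i : ℕ) + 1 ≤ n from hiv)]
    have hzero : ∑ j ∈ Finset.Ico ((i : ℕ) + 1) n,
        (if j = 0 then (ss 0).eval y else max (y - kn j) 0 * (ee j).eval y) = 0 := by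
      refine Finset.sum_eq_zero fun j hj => ?_
      obtain ⟨hj1, hj2⟩ := Finset.mem_Ico.1 hj
      rw [if_neg (by omega)]
      have hlt : y < kn j := lt_of_lt_of_le (hsc ▸ hy2) (hkn_mono _ j hj1 (le_of_lt hj2))
      rw [max_eq_right (by linarith), zero_mul]
    rw [hzero, add_zero, Finset.sum_range_succ']
    have hterm : ∀ j ∈ Finset.range (i : ℕ),
        (if j + 1 = 0 then (ss 0).eval y else max (y - kn (j + 1)) 0 * (ee (j + 1)).eval y)
        = (y - kn (j + 1)) * (ee (j + 1)).eval y := by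
      intro j hj
      rw [if_neg (Nat.succ_ne_zero j)]
      have h1 : kn (j + 1) ≤ kn (i : ℕ) := hkn_mono _ _ (Finset.mem_range.1 hj) (le_of_lt hiv)
      have h2 : kn (i : ℕ) ≤ y := hcs ▸ hy1
      rw [max_eq_left (by linarith)]
    rw [Finset.sum_congr rfl hterm, if_pos rfl]
    have ht := tele (i : ℕ) hiv y
    rw [hss_eq _ hiv] at ht
    have hsi : (⟨(i : ℕ), hiv⟩ : Fin n) = i := Fin.ext rfl
    rw [hsi] at ht
    linarith
  · -- value at the right endpoint
    have hyK : knot (Fin.last n) ∈ K := ⟨hmono.monotone (Fin.zero_le _), le_rfl⟩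
    show g (fun _ => knot (Fin.last n)) 0 = _
    rw [hge0 _ hyK]
    have hyk : kn n = knot (Fin.last n) := hknN
    have hn1 : n = n - 1 + 1 := by omega
    rw [show Finset.range n = Finset.range (n - 1 + 1) from by rw [← hn1]]
    rw [Finset.sum_range_succ']
    have hterm : ∀ j ∈ Finset.range (n - 1),
        (if j + 1 = 0 then (ss 0).eval (knot (Fin.last n))
          else max (knot (Fin.last n) - kn (j + 1)) 0 * (ee (j + 1)).eval (knot (Fin.last n)))
        = (knot (Fin.last n) - kn (j + 1)) * (ee (j + 1)).eval (knot (Fin.last n)) := by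
      intro j hj
      rw [if_neg (Nat.succ_ne_zero j)]
      have h1 : kn (j + 1) ≤ kn n := hkn_mono _ _ (by
        have := Finset.mem_range.1 hj; omega) le_rfl
      rw [hyk] at h1
      rw [max_eq_left (by linarith)]
    rw [Finset.sum_congr rfl hterm, if_pos rfl]
    have ht := tele (n - 1) (by omega) (knot (Fin.last n))
    rw [hss_eq _ (by omega : n - 1 < n)] at ht
    rw [show (⟨n - 1, by omega⟩ : Fin n) = ⟨n - 1, Nat.sub_lt hn Nat.one_pos⟩ from rfl] at ht
    linarith
end

section
/- (Containment of function classes from Proposition 2.) Fix an architecture (d_0, d_1, …, d_H). For every choice of affine layers l_h(x) = W^h x + b^h (W^h a real d_h × d_{h−1} matrix, b^h ∈ ℝ^{d_h}), there exist quadratic layers q_1, …, q_H such that q_H ∘ q_{H−1} ∘ ⋯ ∘ q_1 = l_H ∘ σ_1 ∘ l_{H−1} ∘ σ_1 ∘ ⋯ ∘ σ_1 ∘ l_1 as functions ℝ^{d_0} → ℝ^{d_H}, where σ_1 is the componentwise squaring map σ_1(z) = z². In other words, every function computed by a conventional network with quadratic activation is computed by a quadratic network with identity activation of the same architecture. -/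
/-- An affine layer `x ↦ W x + b`. -/
def affineLayer {m d : ℕ} (W : Matrix (Fin d) (Fin m) ℝ) (b : Fin d → ℝ)
    (x : Fin m → ℝ) : Fin d → ℝ :=
  W.mulVec x + b

/-- The quadratic network with identity activation: `q_H ∘ q_{H−1} ∘ ⋯ ∘ q_1`. -/
def quadNetId (d : ℕ → ℕ)
    (Wr Wg Wb : ∀ h : ℕ, Matrix (Fin (d (h + 1))) (Fin (d h)) ℝ)
    (br bg c : ∀ h : ℕ, Fin (d (h + 1)) → ℝ) :
    ∀ H : ℕ, (Fin (d 0) → ℝ) → Fin (d H) → ℝ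
  | 0 => fun x => x
  | H + 1 => fun x =>
      quadLayer (Wr H) (Wg H) (Wb H) (br H) (bg H) (c H)
        (quadNetId d Wr Wg Wb br bg c H x)

/-- The stack `σ₁ ∘ l_H ∘ σ₁ ∘ ⋯ ∘ σ₁ ∘ l_1` where `σ₁` is componentwise squaring. -/
def sqStack (d : ℕ → ℕ)
    (W : ∀ h : ℕ, Matrix (Fin (d (h + 1))) (Fin (d h)) ℝ)
    (b : ∀ h : ℕ, Fin (d (h + 1)) → ℝ) :
    ∀ H : ℕ, (Fin (d 0) → ℝ) → Fin (d H) → ℝ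
  | 0 => fun x => x
  | H + 1 => fun x => fun i => (affineLayer (W H) (b H) (sqStack d W b H x) i) ^ 2

/-- The conventional network with quadratic activation and architecture
`(d 0, …, d (H+1))`: `l_{H+1} ∘ σ₁ ∘ l_H ∘ σ₁ ∘ ⋯ ∘ σ₁ ∘ l_1`. -/
def convSqNet (d : ℕ → ℕ)
    (W : ∀ h : ℕ, Matrix (Fin (d (h + 1))) (Fin (d h)) ℝ)
    (b : ∀ h : ℕ, Fin (d (h + 1)) → ℝ) (H : ℕ)
    (x : Fin (d 0) → ℝ) : Fin (d (H + 1)) → ℝ :=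
  affineLayer (W H) (b H) (sqStack d W b H x)

/-- containment of function classes from Proposition 2: for every
architecture and every choice of affine layers, there are quadratic layers (of the
same architecture) whose identity-activation composition equals the conventional
network with quadratic activation. -/
theorem stmt8 (d : ℕ → ℕ) (H : ℕ)
    (W : ∀ h : ℕ, Matrix (Fin (d (h + 1))) (Fin (d h)) ℝ)
    (b : ∀ h : ℕ, Fin (d (h + 1)) → ℝ) :
    ∃ (Wr Wg Wb : ∀ h : ℕ, Matrix (Fin (d (h + 1))) (Fin (d h)) ℝ)
      (br bg c : ∀ h : ℕ, Fin (d (h + 1)) → ℝ),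
      ∀ x : Fin (d 0) → ℝ,
        quadNetId d Wr Wg Wb br bg c (H + 1) x = convSqNet d W b H x := by
  refine ⟨W, fun h => if h = H then 0 else W h, fun _ => 0, b,
    fun h => if h = H then 1 else b h, fun _ => 0, fun x => ?_⟩
  have key : ∀ h, h ≤ H →
      quadNetId d W (fun h => if h = H then 0 else W h) (fun _ => 0) b
        (fun h => if h = H then 1 else b h) (fun _ => 0) h x = sqStack d W b h x := by
    intro h hh
    induction h with
    | zero => rfl
    | succ n ih =>
      have hn : n ≠ H := by omega
      simp only [quadNetId, sqStack, ih (by omega), quadLayer, affineLayer, hn, if_neg,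
        Matrix.zero_mulVec]
      funext i
      simp [quadLayer, Matrix.zero_mulVec, sq]
  simp only [quadNetId, key H le_rfl, convSqNet, quadLayer, affineLayer, if_pos rfl,
    Matrix.zero_mulVec]
  funext i
  simp [quadLayer, Matrix.zero_mulVec]
end

section
/- (Strictness of the containment in Proposition 2, witnessed at architecture (1, 2, 1).) There exist quadratic layers q_1 : ℝ → ℝ² and q_2 : ℝ² → ℝ such that (q_2 ∘ q_1)(x) = x³ for all x ∈ ℝ; whereas for every choice of affine maps l_1 : ℝ → ℝ² and l_2 : ℝ² → ℝ, the function l_2 ∘ σ_1 ∘ l_1 (with σ_1(z) = z² componentwise) is a polynomial of degree at most 2 and in particular is not equal to the function x ↦ x³. -/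
/-- strictness of the containment in Proposition 2, at architecture
(1, 2, 1): some composition `q_2 ∘ q_1` of quadratic layers equals `x ↦ x³`,
whereas every `l_2 ∘ σ₁ ∘ l_1` (with `σ₁` componentwise squaring) is a polynomial
of degree at most 2 and in particular never equals `x ↦ x³`. -/
theorem stmt9 :
    (∃ (Wr₁ Wg₁ Wb₁ : Matrix (Fin 2) (Fin 1) ℝ) (br₁ bg₁ c₁ : Fin 2 → ℝ)
        (Wr₂ Wg₂ Wb₂ : Matrix (Fin 1) (Fin 2) ℝ) (br₂ bg₂ c₂ : Fin 1 → ℝ),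
      ∀ x : ℝ,
        quadLayer Wr₂ Wg₂ Wb₂ br₂ bg₂ c₂
          (quadLayer Wr₁ Wg₁ Wb₁ br₁ bg₁ c₁ (fun _ => x)) 0 = x ^ 3) ∧
    (∀ (W₁ : Matrix (Fin 2) (Fin 1) ℝ) (b₁ : Fin 2 → ℝ)
        (W₂ : Matrix (Fin 1) (Fin 2) ℝ) (b₂ : Fin 1 → ℝ),
      (∃ p : Polynomial ℝ, p.natDegree ≤ 2 ∧
        ∀ x : ℝ,
          affineLayer W₂ b₂ (fun i => (affineLayer W₁ b₁ (fun _ => x) i) ^ 2) 0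
            = p.eval x) ∧
      ¬ (∀ x : ℝ,
          affineLayer W₂ b₂ (fun i => (affineLayer W₁ b₁ (fun _ => x) i) ^ 2) 0
            = x ^ 3)) := by
  constructor
  · refine ⟨!![(1:ℝ);0], 0, !![(0:ℝ);1], 0, ![1,0], 0,
      !![(1:ℝ),0], !![(0:ℝ),1], 0, 0, 0, 0, ?_⟩
    intro x
    simp [quadLayer, Matrix.mulVec, dotProduct, Fin.sum_univ_succ]
    ring
  · intro W₁ b₁ W₂ b₂
    set a := W₂ 0 0; set b := W₂ 0 1; set u := W₁ 0 0; set v := W₁ 1 0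
    constructor
    · refine ⟨Polynomial.C (a*u^2+b*v^2) * Polynomial.X^2
        + Polynomial.C (2*(a*u*(b₁ 0)+b*v*(b₁ 1))) * Polynomial.X
        + Polynomial.C (a*(b₁ 0)^2+b*(b₁ 1)^2+b₂ 0), ?_, ?_⟩
      · exact Polynomial.natDegree_quadratic_le
      · intro x
        simp [affineLayer, Matrix.mulVec, dotProduct, Fin.sum_univ_succ]
        ring
    · intro h
      have h1 := h 1; have h2 := h (-1); have h3 := h 2
      have h4 := h (-2); have h0 := h 0
      simp [affineLayer, Matrix.mulVec, dotProduct,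
        Fin.sum_univ_succ] at h0 h1 h2 h3 h4
      nlinarith [h0, h1, h2, h3, h4]
end

section
/- (Lemma 3, series lemma.) Let (a_t)_{t ≥ 1} and (b_t)_{t ≥ 1} be sequences of nonnegative real numbers. Assume that the series Σ_{t=1}^∞ a_t b_t converges, that Σ_{t=1}^∞ a_t diverges, and that there exists K ≥ 0 with |b_{t+1} − b_t| ≤ K a_t for all t. Then b_t converges to 0. -/
open Filter

/-- Lemma 3, series lemma: if `(a_t)` and `(b_t)` are nonnegative,
`Σ a_t b_t` converges, `Σ a_t` diverges, and `|b_{t+1} − b_t| ≤ K a_t` for some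
`K ≥ 0`, then `b_t → 0`. -/
theorem stmt13 (a b : ℕ → ℝ) (ha : ∀ t, 0 ≤ a t) (hb : ∀ t, 0 ≤ b t)
    (hconv : Summable (fun t => a t * b t)) (hdiv : ¬ Summable a)
    (K : ℝ) (hK : 0 ≤ K) (hbound : ∀ t, |b (t + 1) - b t| ≤ K * a t) :
    Tendsto b atTop (nhds 0) := by
  classical
  rw [Metric.tendsto_atTop]
  intro ε hε
  rcases eq_or_lt_of_le hK with hK0 | hKpos
  · -- K = 0 : b is constant
    have hconst : ∀ t, b t = b 0 := by
      intro t
      induction t with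
      | zero => rfl
      | succ t ih =>
        have h := hbound t
        rw [← hK0, zero_mul] at h
        have : b (t + 1) - b t = 0 := abs_nonpos_iff.mp h
        have : b (t + 1) = b t := by linarith
        rw [this, ih]
    have hb0 : b 0 < ε := by
      by_contra h
      push_neg at h
      have hb0pos : 0 < b 0 := lt_of_lt_of_le hε h
      apply hdiv
      have hs : Summable (fun t => a t * b 0) := by
        have : (fun t => a t * b t) = fun t => a t * b 0 := by
          funext t; rw [hconst t]
        rwa [this] at hconv
      exact (summable_mul_right_iff hb0pos.ne').mp hs
    refine ⟨0, fun t _ => ?_⟩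
    rw [Real.dist_eq, sub_zero, abs_of_nonneg (hb t), hconst t]
    exact hb0
  · -- K > 0
    set f : ℕ → ℝ := fun t => a t * b t with hf
    have hfnn : ∀ t, 0 ≤ f t := fun t => mul_nonneg (ha t) (hb t)
    have htail : Tendsto (fun i => ∑' k, f (k + i)) atTop (nhds 0) :=
      tendsto_sum_nat_add f
    have hδ : 0 < ε ^ 2 / (4 * K) := by positivity
    obtain ⟨N, hN⟩ : ∃ N, ∑' k, f (k + N) < ε ^ 2 / (4 * K) := by
      have := htail.eventually (gt_mem_nhds hδ)
      exact this.exists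
    refine ⟨N, fun n hn => ?_⟩
    rw [Real.dist_eq, sub_zero, abs_of_nonneg (hb n)]
    by_contra hbn
    push_neg at hbn
    -- hbn : ε ≤ b n
    have hconv' : Summable (fun t => f (t + n)) := (summable_nat_add_iff n).mpr hconv
    have hdiv' : ¬ Summable (fun t => a (t + n)) :=
      fun h => hdiv ((summable_nat_add_iff n).mp h)
    have hexists : ∃ m, b (m + n) < ε / 2 := by
      by_contra h
      push_neg at h
      apply hdiv'
      have h2 : Summable (fun t => ε / 2 * a (t + n)) := by
        apply Summable.of_nonneg_of_le (fun t => mul_nonneg (by positivity) (ha _)) (fun t => ?_) hconv'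
        calc ε / 2 * a (t + n) = a (t + n) * (ε / 2) := mul_comm _ _
          _ ≤ a (t + n) * b (t + n) :=
              mul_le_mul_of_nonneg_left (h t) (ha _)
      have hε2 : (ε / 2 : ℝ) ≠ 0 := by positivity
      exact (summable_mul_left_iff hε2).mp h2
    set m := Nat.find hexists with hm_def
    have hm : b (m + n) < ε / 2 := Nat.find_spec hexists
    have hml : ∀ k < m, ε / 2 ≤ b (k + n) := fun k hk =>
      le_of_not_gt (Nat.find_min hexists hk)
    -- telescoping bound
    have htel : b (m + n) - b n = ∑ k ∈ Finset.range m, (b (k + 1 + n) - b (k + n)) := by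
      have := Finset.sum_range_sub (fun k => b (k + n)) m
      simpa using this.symm
    have hsum_a : ε / 2 ≤ K * ∑ k ∈ Finset.range m, a (k + n) := by
      have h1 : ε / 2 ≤ b n - b (m + n) := by linarith
      calc ε / 2 ≤ b n - b (m + n) := h1
        _ ≤ |b (m + n) - b n| := by rw [abs_sub_comm]; exact le_abs_self _
        _ = |∑ k ∈ Finset.range m, (b (k + 1 + n) - b (k + n))| := by rw [htel]
        _ ≤ ∑ k ∈ Finset.range m, |b (k + 1 + n) - b (k + n)| :=
            Finset.abs_sum_le_sum_abs _ _
        _ ≤ ∑ k ∈ Finset.range m, K * a (k + n) := by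
            apply Finset.sum_le_sum
            intro k _
            have := hbound (k + n)
            have heq : k + 1 + n = k + n + 1 := by omega
            rwa [heq]
        _ = K * ∑ k ∈ Finset.range m, a (k + n) := (Finset.mul_sum _ _ _).symm
    have hsum_f : ε ^ 2 / (4 * K) ≤ ∑ k ∈ Finset.range m, f (k + n) := by
      have h2 : ε / (2 * K) ≤ ∑ k ∈ Finset.range m, a (k + n) := by
        rw [div_le_iff₀ (by positivity)]
        calc ε = 2 * (ε / 2) := by ring
          _ ≤ 2 * (K * ∑ k ∈ Finset.range m, a (k + n)) := by linarith
          _ = (∑ k ∈ Finset.range m, a (k + n)) * (2 * K) := by ring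
      calc ε ^ 2 / (4 * K) = (ε / 2) * (ε / (2 * K)) := by
            field_simp; ring
        _ ≤ (ε / 2) * ∑ k ∈ Finset.range m, a (k + n) := by
            apply mul_le_mul_of_nonneg_left h2 (by positivity)
        _ = ∑ k ∈ Finset.range m, (ε / 2) * a (k + n) := Finset.mul_sum _ _ _
        _ ≤ ∑ k ∈ Finset.range m, f (k + n) := by
            apply Finset.sum_le_sum
            intro k hk
            calc ε / 2 * a (k + n) = a (k + n) * (ε / 2) := mul_comm _ _
              _ ≤ a (k + n) * b (k + n) :=
                  mul_le_mul_of_nonneg_left (hml k (Finset.mem_range.mp hk)) (ha _)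
    -- finite sum from n is bounded by tail tsum from N
    have hconvN : Summable (fun t => f (t + N)) := (summable_nat_add_iff N).mpr hconv
    have hle_tsum : ∑ k ∈ Finset.range m, f (k + n) ≤ ∑' k, f (k + N) := by
      obtain ⟨d, rfl⟩ : ∃ d, n = d + N := ⟨n - N, by omega⟩
      have heq : ∑ k ∈ Finset.range m, f (k + (d + N)) =
          ∑ j ∈ Finset.Ico d (d + m), f (j + N) := by
        rw [Finset.sum_Ico_eq_sum_range]
        simp only [Nat.add_sub_cancel_left]
        apply Finset.sum_congr rfl
        intro k _
        congr 1
        omega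
      rw [heq]
      exact Summable.sum_le_tsum _ (fun i _ => hfnn _) hconvN
    linarith
end

section
/- (Lemma 4, key descent estimate.) In the SGD setting below, assume additionally that L has M-Lipschitz gradient (M-smoothness) and that every diagonal entry of every η_t lies in [0, 1/M]. Then for every T ≥ 1, E[ Σ_{t=1}^T ⟨∇L(Ξ_t), η_t ∇L(Ξ_t)⟩ ] ≤ 2 ( E[L(Ξ_1) − L(Ξ_{T+1})] + (M S²/2) Σ_{t=1}^T ‖η_t‖² ), where ‖η_t‖ is the Frobenius norm of η_t. -/
open MeasureTheory Filter
open scoped RealInnerProductSpace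

/-- Application of the diagonal matrix with diagonal entries `d` to a vector. -/
noncomputable def etaApply {K : ℕ} (d : Fin K → ℝ) (v : EuclideanSpace ℝ (Fin K)) :
    EuclideanSpace ℝ (Fin K) :=
  WithLp.toLp 2 (fun i => d i * v i)

/-- Frobenius norm of the diagonal matrix with diagonal entries `d`. -/
noncomputable def frobDiag {K : ℕ} (d : Fin K → ℝ) : ℝ :=
  Real.sqrt (∑ i, (d i) ^ 2)

/-- Quadratic upper bound (descent lemma) for a function with Lipschitz gradient. -/
lemma sgd_descent {F : Type*} [NormedAddCommGroup F] [InnerProductSpace ℝ F] [CompleteSpace F]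
    (L : F → ℝ) (hL : Differentiable ℝ L) (M : ℝ)
    (hsmooth : ∀ u v, ‖gradient L u - gradient L v‖ ≤ M * ‖u - v‖) (x y : F) :
    L y ≤ L x + ⟪gradient L x, y - x⟫ + M / 2 * ‖y - x‖ ^ 2 := by
  set v := y - x with hv
  have hline : ∀ s : ℝ, HasDerivAt (fun s : ℝ => x + s • v) v s := fun s => by
    simpa using ((hasDerivAt_id s).smul_const v).const_add x
  have hphi : ∀ s : ℝ, HasDerivAt (fun s : ℝ => L (x + s • v))
      ⟪gradient L (x + s • v), v⟫ s := fun s => by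
    have h1 := (hL (x + s • v)).hasFDerivAt.comp_hasDerivAt s (hline s)
    rw [show (fderiv ℝ L (x + s • v)) v = ⟪gradient L (x + s • v), v⟫ by
      rw [(hL (x + s • v)).hasGradientAt.hasFDerivAt.fderiv]
      exact InnerProductSpace.toDual_apply_apply] at h1
    exact h1
  set ψ : ℝ → ℝ := fun s => L (x + s • v) - s * ⟪gradient L x, v⟫ - s ^ 2 * (M / 2 * ‖v‖ ^ 2)
    with hψ
  have hψd : ∀ s : ℝ, HasDerivAt ψ
      (⟪gradient L (x + s • v), v⟫ - ⟪gradient L x, v⟫ - 2 * s * (M / 2 * ‖v‖ ^ 2)) s := by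
    intro s
    have h2 : HasDerivAt (fun s : ℝ => s * ⟪gradient L x, v⟫) ⟪gradient L x, v⟫ s := by
      simpa using (hasDerivAt_id s).mul_const _
    have h3 : HasDerivAt (fun s : ℝ => s ^ 2 * (M / 2 * ‖v‖ ^ 2)) (2 * s * (M / 2 * ‖v‖ ^ 2)) s := by
      have := (hasDerivAt_pow 2 s).mul_const (M / 2 * ‖v‖ ^ 2)
      exact this.congr_deriv (by norm_num)
    exact ((hphi s).sub h2).sub h3
  have hmono : AntitoneOn ψ (Set.Icc (0:ℝ) 1) := by
    apply antitoneOn_of_deriv_nonpos (convex_Icc 0 1)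
    · exact fun s _ => ((hψd s).continuousAt).continuousWithinAt
    · exact fun s _ => (hψd s).differentiableAt.differentiableWithinAt
    · intro s hs
      rw [interior_Icc] at hs
      rw [(hψd s).deriv]
      have hin : ⟪gradient L (x + s • v) - gradient L x, v⟫ ≤ M * s * ‖v‖ ^ 2 := by
        calc ⟪gradient L (x + s • v) - gradient L x, v⟫
            ≤ ‖gradient L (x + s • v) - gradient L x‖ * ‖v‖ := real_inner_le_norm _ _
          _ ≤ M * ‖(x + s • v) - x‖ * ‖v‖ := by
              have := hsmooth (x + s • v) x
              nlinarith [norm_nonneg v, norm_nonneg (gradient L (x + s • v) - gradient L x)]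
          _ = M * s * ‖v‖ ^ 2 := by
              rw [add_sub_cancel_left, norm_smul, Real.norm_eq_abs, abs_of_pos hs.1]; ring
      have hsplit : ⟪gradient L (x + s • v), v⟫ - ⟪gradient L x, v⟫
          = ⟪gradient L (x + s • v) - gradient L x, v⟫ := by
        rw [inner_sub_left]
      rw [hsplit]
      linarith
  have h01 := hmono (Set.mem_Icc.2 ⟨le_refl 0, zero_le_one⟩)
    (Set.mem_Icc.2 ⟨zero_le_one, le_refl 1⟩) zero_le_one
  simp only [hψ, zero_smul, add_zero, one_smul, zero_mul, one_mul] at h01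
  have hxy : x + v = y := by rw [hv]; abel
  rw [hxy] at h01
  norm_num at h01
  have hfd : (fderiv ℝ L x) v = ⟪gradient L x, v⟫ := by
    rw [(hL x).hasGradientAt.hasFDerivAt.fderiv]
    exact InnerProductSpace.toDual_apply_apply
  linarith

lemma sgd_telescope (h : ℕ → ℝ) (T : ℕ) :
    ∑ t ∈ Finset.Icc 1 T, (h t - h (t + 1)) = h 1 - h (T + 1) := by
  induction T with
  | zero => simp
  | succ T ih =>
      rw [Finset.sum_Icc_succ_top (Nat.succ_le_succ (Nat.zero_le T)), ih]
      ring

lemma etaApply_norm_le {K : ℕ} (d : Fin K → ℝ) (c : ℝ) (hc : 0 ≤ c)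
    (hd : ∀ i, 0 ≤ d i) (hdc : ∀ i, d i ≤ c) (v : EuclideanSpace ℝ (Fin K)) :
    ‖etaApply d v‖ ≤ c * ‖v‖ := by
  rw [EuclideanSpace.norm_eq, EuclideanSpace.norm_eq]
  rw [show c * Real.sqrt (∑ i, ‖v i‖ ^ 2) = Real.sqrt (c ^ 2 * ∑ i, ‖v i‖ ^ 2) by
    rw [Real.sqrt_mul (sq_nonneg c), Real.sqrt_sq hc]]
  apply Real.sqrt_le_sqrt
  rw [Finset.mul_sum]
  apply Finset.sum_le_sum
  intro i _
  have : ‖etaApply d v i‖ = d i * ‖v i‖ := by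
    simp [etaApply, abs_mul, abs_of_nonneg (hd i)]
  rw [this]
  have h1 : d i * ‖v i‖ ≤ c * ‖v i‖ :=
    mul_le_mul_of_nonneg_right (hdc i) (norm_nonneg _)
  nlinarith [norm_nonneg (v i), mul_nonneg (hd i) (norm_nonneg (v i))]

lemma inner_etaApply {K : ℕ} (d : Fin K → ℝ) (u v : EuclideanSpace ℝ (Fin K)) :
    ⟪u, etaApply d v⟫ = ∑ i, d i * (u i * v i) := by
  simp only [PiLp.inner_apply, RCLike.inner_apply, conj_trivial]
  refine Finset.sum_congr rfl fun i _ => ?_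
  show (d i * v i) * u i = _
  ring

lemma euclid_norm_sq {K : ℕ} (v : EuclideanSpace ℝ (Fin K)) : ‖v‖ ^ 2 = ∑ i, (v i) ^ 2 := by
  rw [EuclideanSpace.norm_eq, Real.sq_sqrt (by positivity)]
  simp only [Real.norm_eq_abs, sq_abs]

lemma coord_abs_le_norm {K : ℕ} (v : EuclideanSpace ℝ (Fin K)) (i : Fin K) : |v i| ≤ ‖v‖ := by
  have h1 : (v i) ^ 2 ≤ ‖v‖ ^ 2 := by
    rw [euclid_norm_sq]
    exact Finset.single_le_sum (f := fun j => (v j) ^ 2) (fun j _ => sq_nonneg _)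
      (Finset.mem_univ i)
  calc |v i| = Real.sqrt ((v i) ^ 2) := (Real.sqrt_sq_eq_abs _).symm
    _ ≤ Real.sqrt (‖v‖ ^ 2) := Real.sqrt_le_sqrt h1
    _ = ‖v‖ := Real.sqrt_sq (norm_nonneg _)

lemma sgd_step {K : ℕ} (L : EuclideanSpace ℝ (Fin K) → ℝ) (hL : Differentiable ℝ L)
    (M : ℝ) (hM : 0 < M)
    (hsmooth : ∀ u v, ‖gradient L u - gradient L v‖ ≤ M * ‖u - v‖)
    (d : Fin K → ℝ) (hdnn : ∀ i, 0 ≤ d i) (hdle : ∀ i, d i ≤ 1 / M)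
    (S : ℝ) (hS : 0 ≤ S) (x gval : EuclideanSpace ℝ (Fin K))
    (hnz : ‖gval - gradient L x‖ ≤ S) :
    ⟪gradient L x, etaApply d (gradient L x)⟫
      ≤ 2 * (L x - L (x - etaApply d gval))
        + 2 * (∑ i, (M * d i ^ 2 - d i) * (gradient L x i * (gval i - gradient L x i)))
        + M * S ^ 2 * frobDiag d ^ 2 := by
  have hdesc := sgd_descent L hL M hsmooth x (x - etaApply d gval)
  have hyx : x - etaApply d gval - x = -(etaApply d gval) := by abel
  rw [hyx, inner_neg_right, norm_neg, inner_etaApply, euclid_norm_sq] at hdesc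
  rw [inner_etaApply]
  have hfrob : frobDiag d ^ 2 = ∑ i, d i ^ 2 := by
    rw [frobDiag, Real.sq_sqrt]
    exact Finset.sum_nonneg fun i _ => sq_nonneg _
  rw [hfrob]
  have hzb : ∀ i, (gval i - gradient L x i) ^ 2 ≤ S ^ 2 := by
    intro i
    have h1 : (gval i - gradient L x i) ^ 2 ≤ ‖gval - gradient L x‖ ^ 2 := by
      rw [euclid_norm_sq]
      have : (gval i - gradient L x i) ^ 2 = ((gval - gradient L x) i) ^ 2 := by
        simp [PiLp.sub_apply]
      rw [this]
      exact Finset.single_le_sum (f := fun j => ((gval - gradient L x) j) ^ 2)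
        (fun j _ => sq_nonneg _) (Finset.mem_univ i)
    have h2 : ‖gval - gradient L x‖ ^ 2 ≤ S ^ 2 := by
      nlinarith [norm_nonneg (gval - gradient L x)]
    linarith
  have hsum : ∑ i, d i * (gradient L x i * gradient L x i)
      ≤ 2 * (∑ i, d i * (gradient L x i * gval i))
        - 2 * (M / 2 * ∑ i, (etaApply d gval i) ^ 2)
        + 2 * (∑ i, (M * d i ^ 2 - d i) * (gradient L x i * (gval i - gradient L x i)))
        + M * S ^ 2 * ∑ i, d i ^ 2 := by
    have hterm : ∀ i : Fin K, d i * (gradient L x i * gradient L x i)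
        ≤ 2 * (d i * (gradient L x i * gval i))
          - 2 * (M / 2 * (etaApply d gval i) ^ 2)
          + 2 * ((M * d i ^ 2 - d i) * (gradient L x i * (gval i - gradient L x i)))
          + M * S ^ 2 * d i ^ 2 := by
      intro i
      have hd1 : M * d i ^ 2 ≤ d i := by nlinarith [hdnn i, (le_div_iff₀ hM).mp (hdle i)]
      have hzi := hzb i
      have hea : etaApply d gval i = d i * gval i := rfl
      rw [hea]
      nlinarith [mul_nonneg (sub_nonneg.2 hd1) (sq_nonneg (gradient L x i)),
        mul_nonneg (mul_nonneg hM.le (sq_nonneg (d i))) (sub_nonneg.2 hzi)]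
    calc ∑ i, d i * (gradient L x i * gradient L x i) ≤ _ :=
        Finset.sum_le_sum fun i _ => hterm i
      _ = _ := by
        simp only [Finset.mul_sum, ← Finset.sum_sub_distrib, ← Finset.sum_add_distrib]
  linarith

/-- Lemma 4, key descent estimate: in the SGD setting, if moreover
`L` is `M`-smooth and every diagonal entry of every `η_t` lies in `[0, 1/M]`, then
for every `T ≥ 1`,
`E[Σ_{t=1}^T ⟨∇L(Ξ_t), η_t ∇L(Ξ_t)⟩] ≤ 2(E[L(Ξ_1) − L(Ξ_{T+1})] + (M S²/2) Σ_{t=1}^T ‖η_t‖²)`. -/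
theorem stmt15 {K : ℕ} {Ω : Type*} {m0 : MeasurableSpace Ω}
    (P : Measure Ω) [IsProbabilityMeasure P] (ℱ : Filtration ℕ m0)
    (L : EuclideanSpace ℝ (Fin K) → ℝ) (hL : Differentiable ℝ L)
    (M : ℝ) (hM : 0 < M)
    (hsmooth : ∀ u v, ‖gradient L u - gradient L v‖ ≤ M * ‖u - v‖)
    (dvec : ℕ → Fin K → ℝ) (hdnn : ∀ t i, 0 ≤ dvec t i)
    (hdle : ∀ t i, dvec t i ≤ 1 / M)
    (Ξ g : ℕ → Ω → EuclideanSpace ℝ (Fin K))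
    (hΞ1 : ∃ x₀, Ξ 1 = fun _ => x₀)
    (hΞmeas : ∀ t : ℕ, 1 ≤ t → StronglyMeasurable[ℱ (t - 1)] (Ξ t))
    (hgmeas : ∀ t : ℕ, 1 ≤ t → StronglyMeasurable[ℱ t] (g t))
    (hunbiased : ∀ t : ℕ, 1 ≤ t →
      P[g t | ℱ (t - 1)] =ᵐ[P] fun ω => gradient L (Ξ t ω))
    (S : ℝ) (hS : 0 ≤ S)
    (hnoise : ∀ t : ℕ, 1 ≤ t → ∀ᵐ ω ∂P, ‖g t ω - gradient L (Ξ t ω)‖ ≤ S)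
    (hupdate : ∀ t : ℕ, 1 ≤ t → ∀ ω, Ξ (t + 1) ω = Ξ t ω - etaApply (dvec t) (g t ω)) :
    ∀ T : ℕ, 1 ≤ T →
      ∫ ω, (∑ t ∈ Finset.Icc 1 T,
          ⟪gradient L (Ξ t ω), etaApply (dvec t) (gradient L (Ξ t ω))⟫) ∂P
        ≤ 2 * ((∫ ω, (L (Ξ 1 ω) - L (Ξ (T + 1) ω)) ∂P)
            + M * S ^ 2 / 2 * ∑ t ∈ Finset.Icc 1 T, (frobDiag (dvec t)) ^ 2) := by
  classical
  -- continuity of the gradient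
  have hgc : Continuous (gradient L) := by
    have hl : LipschitzWith (Real.toNNReal M) (gradient L) := by
      apply LipschitzWith.of_dist_le_mul
      intro u v
      rw [dist_eq_norm, dist_eq_norm, Real.coe_toNNReal M hM.le]
      exact hsmooth u v
    exact hl.continuous
  have hgradbd : ∀ u : EuclideanSpace ℝ (Fin K),
      ‖gradient L u‖ ≤ ‖gradient L 0‖ + M * ‖u‖ := by
    intro u
    have h1 := hsmooth u 0
    have h2 := norm_sub_norm_le (gradient L u) (gradient L 0)
    rw [sub_zero] at h1
    linarith
  have hetacont : ∀ t : ℕ, Continuous (etaApply (dvec t)) := by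
    intro t
    have hlin : ∀ v w : EuclideanSpace ℝ (Fin K),
        etaApply (dvec t) v - etaApply (dvec t) w = etaApply (dvec t) (v - w) := by
      intro v w
      ext i
      simp [etaApply, PiLp.sub_apply, mul_sub]
    have hl : LipschitzWith (Real.toNNReal (1 / M)) (etaApply (dvec t)) := by
      apply LipschitzWith.of_dist_le_mul
      intro v w
      rw [dist_eq_norm, dist_eq_norm, Real.coe_toNNReal _ (by positivity : (0:ℝ) ≤ 1 / M),
        hlin v w]
      exact etaApply_norm_le _ _ (by positivity) (hdnn t) (hdle t) _
    exact hl.continuous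
  have hΞm0 : ∀ t : ℕ, 1 ≤ t → StronglyMeasurable (Ξ t) :=
    fun t ht => (hΞmeas t ht).mono (ℱ.le _)
  -- a.s. bound on the iterates
  have hbd : ∀ t : ℕ, 1 ≤ t → ∃ C, 0 ≤ C ∧ ∀ᵐ ω ∂P, ‖Ξ t ω‖ ≤ C := by
    intro t ht
    induction t, ht using Nat.le_induction with
    | base =>
        obtain ⟨x₀, h⟩ := hΞ1
        exact ⟨‖x₀‖, norm_nonneg _, ae_of_all _ fun ω => by rw [h]⟩
    | succ t ht ih =>
        obtain ⟨C, hC0, hC⟩ := ih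
        refine ⟨C + (1 / M) * (‖gradient L 0‖ + M * C + S), by positivity, ?_⟩
        filter_upwards [hC, hnoise t ht] with ω h1 h2
        rw [hupdate t ht ω]
        have hg1 : ‖g t ω‖ ≤ ‖gradient L 0‖ + M * C + S := by
          have h3 : ‖g t ω‖ ≤ ‖gradient L (Ξ t ω)‖ + ‖g t ω - gradient L (Ξ t ω)‖ := by
            have := norm_add_le (gradient L (Ξ t ω)) (g t ω - gradient L (Ξ t ω))
            simpa using this
          have h4 := hgradbd (Ξ t ω)
          nlinarith
        calc ‖Ξ t ω - etaApply (dvec t) (g t ω)‖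
            ≤ ‖Ξ t ω‖ + ‖etaApply (dvec t) (g t ω)‖ := norm_sub_le _ _
          _ ≤ C + (1 / M) * (‖gradient L 0‖ + M * C + S) := by
              have h5 := etaApply_norm_le (dvec t) (1 / M) (by positivity) (hdnn t) (hdle t)
                (g t ω)
              have h6 : (1 / M) * ‖g t ω‖ ≤ (1 / M) * (‖gradient L 0‖ + M * C + S) := by
                apply mul_le_mul_of_nonneg_left hg1 (by positivity)
              linarith
  -- bound for |L| on balls
  have hLbd : ∀ C : ℝ, 0 ≤ C → ∃ B, ∀ u : EuclideanSpace ℝ (Fin K), ‖u‖ ≤ C → |L u| ≤ B := by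
    intro C hC
    refine ⟨|L 0| + (‖gradient L 0‖ * C + M / 2 * C ^ 2)
      + ((‖gradient L 0‖ + M * C) * C + M / 2 * C ^ 2), fun u hu => ?_⟩
    have h1 := sgd_descent L hL M hsmooth 0 u
    have h2 := sgd_descent L hL M hsmooth u 0
    rw [sub_zero] at h1
    rw [zero_sub, norm_neg] at h2
    have e1 : |⟪gradient L 0, u⟫| ≤ ‖gradient L 0‖ * C := by
      refine (abs_real_inner_le_norm _ _).trans ?_
      exact mul_le_mul_of_nonneg_left hu (norm_nonneg _)
    have e2 : |⟪gradient L u, -u⟫| ≤ (‖gradient L 0‖ + M * C) * C := by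
      refine (abs_real_inner_le_norm _ _).trans ?_
      rw [norm_neg]
      have h3 := hgradbd u
      have h4 : ‖gradient L u‖ ≤ ‖gradient L 0‖ + M * C := by nlinarith
      exact mul_le_mul h4 hu (norm_nonneg _) (by positivity)
    have e0 : ‖u‖ ^ 2 ≤ C ^ 2 := by nlinarith [norm_nonneg u]
    have e3 : M / 2 * ‖u‖ ^ 2 ≤ M / 2 * C ^ 2 :=
      mul_le_mul_of_nonneg_left e0 (by positivity)
    have p1 : 0 ≤ (‖gradient L 0‖ + M * C) * C := by positivity
    have p2 : 0 ≤ M / 2 * C ^ 2 := by positivity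
    have p3 : 0 ≤ ‖gradient L 0‖ * C := by positivity
    rw [abs_le]
    constructor
    · linarith [neg_abs_le (L 0), neg_abs_le ⟪gradient L u, -u⟫,
        le_abs_self ⟪gradient L u, -u⟫, abs_nonneg ⟪gradient L 0, u⟫]
    · linarith [le_abs_self (L 0), le_abs_self ⟪gradient L 0, u⟫, neg_abs_le ⟪gradient L 0, u⟫]
  -- the Y functional
  set Yb : ℕ → Ω → ℝ := fun t ω => ∑ i, ((M * dvec t i ^ 2 - dvec t i) * gradient L (Ξ t ω) i)
    * (g t ω i - gradient L (Ξ t ω) i) with hYb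
  -- main per-step package
  have hpack : ∀ t : ℕ, 1 ≤ t →
      Integrable (fun ω => ⟪gradient L (Ξ t ω), etaApply (dvec t) (gradient L (Ξ t ω))⟫) P ∧
      Integrable (fun ω => L (Ξ t ω)) P ∧
      Integrable (Yb t) P ∧ ∫ ω, Yb t ω ∂P = 0 := by
    intro t ht
    obtain ⟨C, hC0, hC⟩ := hbd t ht
    set B := ‖gradient L 0‖ + M * C with hBdef
    have hB0 : 0 ≤ B := by positivity
    have hVb : ∀ᵐ ω ∂P, ‖gradient L (Ξ t ω)‖ ≤ B := by
      filter_upwards [hC] with ω h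
      have := hgradbd (Ξ t ω)
      nlinarith
    have hVsm : StronglyMeasurable[ℱ (t - 1)] (fun ω => gradient L (Ξ t ω)) :=
      hgc.comp_stronglyMeasurable (hΞmeas t ht)
    have hVsm0 : StronglyMeasurable (fun ω => gradient L (Ξ t ω)) := hVsm.mono (ℱ.le _)
    have hgsm0 : StronglyMeasurable (g t) := (hgmeas t ht).mono (ℱ.le _)
    have hZsm0 : StronglyMeasurable (fun ω => g t ω - gradient L (Ξ t ω)) := hgsm0.sub hVsm0
    have hZb := hnoise t ht
    have hVint : Integrable (fun ω => gradient L (Ξ t ω)) P :=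
      ⟨hVsm0.aestronglyMeasurable, HasFiniteIntegral.of_bounded hVb⟩
    have hZint : Integrable (fun ω => g t ω - gradient L (Ξ t ω)) P :=
      ⟨hZsm0.aestronglyMeasurable, HasFiniteIntegral.of_bounded hZb⟩
    have hgint : Integrable (g t) P := by
      have heq : g t = (fun ω => (g t ω - gradient L (Ξ t ω)) + gradient L (Ξ t ω)) := by
        funext ω; simp
      rw [heq]
      exact hZint.add hVint
    -- integrability of A
    have hA : Integrable
        (fun ω => ⟪gradient L (Ξ t ω), etaApply (dvec t) (gradient L (Ξ t ω))⟫) P := by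
      have hcont : Continuous (fun x : EuclideanSpace ℝ (Fin K) =>
          ⟪gradient L x, etaApply (dvec t) (gradient L x)⟫) :=
        Continuous.inner hgc ((hetacont t).comp hgc)
      refine ⟨(hcont.comp_stronglyMeasurable (hΞm0 t ht)).aestronglyMeasurable,
        HasFiniteIntegral.of_bounded (C := B * ((1 / M) * B)) ?_⟩
      filter_upwards [hVb] with ω h
      rw [Real.norm_eq_abs]
      calc |⟪gradient L (Ξ t ω), etaApply (dvec t) (gradient L (Ξ t ω))⟫|
          ≤ ‖gradient L (Ξ t ω)‖ * ‖etaApply (dvec t) (gradient L (Ξ t ω))‖ :=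
            abs_real_inner_le_norm _ _
        _ ≤ B * ((1 / M) * B) := by
            have h5 := etaApply_norm_le (dvec t) (1 / M) (by positivity) (hdnn t) (hdle t)
              (gradient L (Ξ t ω))
            have h6 : (1 / M) * ‖gradient L (Ξ t ω)‖ ≤ (1 / M) * B :=
              mul_le_mul_of_nonneg_left h (by positivity)
            exact mul_le_mul h (h5.trans h6) (norm_nonneg _) hB0
    -- integrability of L ∘ Ξ t
    have hLint : Integrable (fun ω => L (Ξ t ω)) P := by
      obtain ⟨BL, hBL⟩ := hLbd C hC0
      refine ⟨(hL.continuous.comp_stronglyMeasurable (hΞm0 t ht)).aestronglyMeasurable,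
        HasFiniteIntegral.of_bounded (C := BL) ?_⟩
      filter_upwards [hC] with ω h
      exact hBL _ h
    -- conditional expectation of the noise is zero
    have hcond : P[(fun ω => g t ω - gradient L (Ξ t ω)) | ℱ (t - 1)] =ᵐ[P] 0 := by
      have h1 : P[(fun ω => g t ω - gradient L (Ξ t ω)) | ℱ (t - 1)]
          =ᵐ[P] P[g t | ℱ (t - 1)] - P[(fun ω => gradient L (Ξ t ω)) | ℱ (t - 1)] :=
        condExp_sub hgint hVint _
      have h2 : P[(fun ω => gradient L (Ξ t ω)) | ℱ (t - 1)]
          = fun ω => gradient L (Ξ t ω) :=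
        condExp_of_stronglyMeasurable (ℱ.le _) hVsm hVint
      filter_upwards [h1, hunbiased t ht] with ω e1 e2
      rw [e1, Pi.sub_apply, e2, h2]
      simp
    -- per-coordinate: integrability and zero mean
    have hcomp : ∀ i : Fin K,
        Integrable (fun ω => ((M * dvec t i ^ 2 - dvec t i) * gradient L (Ξ t ω) i)
          * (g t ω i - gradient L (Ξ t ω) i)) P ∧
        ∫ ω, ((M * dvec t i ^ 2 - dvec t i) * gradient L (Ξ t ω) i)
          * (g t ω i - gradient L (Ξ t ω) i) ∂P = 0 := by
      intro i
      have hproj : Continuous (fun v : EuclideanSpace ℝ (Fin K) => v i) :=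
        (EuclideanSpace.proj (𝕜 := ℝ) i).continuous
      set ci : Ω → ℝ := fun ω => (M * dvec t i ^ 2 - dvec t i) * gradient L (Ξ t ω) i
        with hcidef
      set zi : Ω → ℝ := fun ω => g t ω i - gradient L (Ξ t ω) i with hzidef
      have hcism : StronglyMeasurable[ℱ (t - 1)] ci :=
        (hproj.comp_stronglyMeasurable hVsm).const_mul _
      have hzism : StronglyMeasurable zi := by
        have : zi = fun ω => (g t ω - gradient L (Ξ t ω)) i := by
          funext ω; simp [hzidef, PiLp.sub_apply]
        rw [this]
        exact hproj.comp_stronglyMeasurable hZsm0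
      have hzib : ∀ᵐ ω ∂P, ‖zi ω‖ ≤ S := by
        filter_upwards [hZb] with ω h
        rw [Real.norm_eq_abs]
        have : zi ω = (g t ω - gradient L (Ξ t ω)) i := by simp [hzidef, PiLp.sub_apply]
        rw [this]
        exact (coord_abs_le_norm _ i).trans h
      have hziint : Integrable zi P := ⟨hzism.aestronglyMeasurable,
        HasFiniteIntegral.of_bounded hzib⟩
      have hmulint : Integrable (ci * zi) P := by
        refine ⟨((hcism.mono (ℱ.le _)).mul hzism).aestronglyMeasurable,
          HasFiniteIntegral.of_bounded (C := (|M * dvec t i ^ 2 - dvec t i| * B) * S) ?_⟩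
        filter_upwards [hVb, hzib] with ω h1 h2
        rw [Pi.mul_apply, Real.norm_eq_abs, abs_mul, hcidef]
        have hc1 : |(M * dvec t i ^ 2 - dvec t i) * gradient L (Ξ t ω) i|
            ≤ |M * dvec t i ^ 2 - dvec t i| * B := by
          rw [abs_mul]
          exact mul_le_mul_of_nonneg_left ((coord_abs_le_norm _ i).trans h1) (abs_nonneg _)
        rw [Real.norm_eq_abs] at h2
        exact mul_le_mul hc1 h2 (abs_nonneg _) (by positivity)
      -- conditional expectation of zi is zero
      have hzicond : P[zi | ℱ (t - 1)] =ᵐ[P] 0 := by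
        have h0 : (fun _ : Ω => (0 : ℝ)) =ᵐ[P] P[zi | ℱ (t - 1)] := by
          refine ae_eq_condExp_of_forall_setIntegral_eq (ℱ.le _) hziint
            (fun s _ _ => (integrable_const (0 : ℝ)).integrableOn)
            (fun s hs hμs => ?_)
            stronglyMeasurable_const.aestronglyMeasurable
          have hZres : ∫ ω in s, (g t ω - gradient L (Ξ t ω)) ∂P = 0 := by
            rw [← setIntegral_condExp (ℱ.le _) hZint hs]
            have hres : ∀ᵐ ω ∂P.restrict s,
                (P[(fun ω => g t ω - gradient L (Ξ t ω)) | ℱ (t - 1)]) ω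
                  = (0 : EuclideanSpace ℝ (Fin K)) := ae_restrict_of_ae hcond
            rw [integral_congr_ae hres]
            simp
          have hzi2 : ∫ ω in s, zi ω ∂P
              = (EuclideanSpace.proj (𝕜 := ℝ) i) (∫ ω in s, (g t ω - gradient L (Ξ t ω)) ∂P) := by
            rw [← ContinuousLinearMap.integral_comp_comm _ hZint.integrableOn]
            refine integral_congr_ae (ae_of_all _ fun ω => ?_)
            simp [hzidef, PiLp.sub_apply]
          rw [hzi2, hZres]
          simp
        exact h0.symm
      have hpull := condExp_mul_of_stronglyMeasurable_left hcism hmulint hziint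
      have hzero : ∫ ω, ci ω * zi ω ∂P = 0 := by
        have hmz : P[ci * zi | ℱ (t - 1)] =ᵐ[P] 0 := by
          refine hpull.trans ?_
          filter_upwards [hzicond] with ω h
          rw [Pi.mul_apply, h]
          simp
        calc ∫ ω, ci ω * zi ω ∂P = ∫ ω, (P[ci * zi | ℱ (t - 1)]) ω ∂P :=
            (integral_condExp (ℱ.le _)).symm
          _ = 0 := by rw [integral_congr_ae hmz]; simp
      exact ⟨hmulint, hzero⟩
    have hYint : Integrable (Yb t) P := by
      rw [hYb]
      exact integrable_finset_sum _ fun i _ => (hcomp i).1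
    have hYzero : ∫ ω, Yb t ω ∂P = 0 := by
      rw [hYb]
      rw [integral_finset_sum _ fun i _ => (hcomp i).1]
      exact Finset.sum_eq_zero fun i _ => (hcomp i).2
    exact ⟨hA, hLint, hYint, hYzero⟩
  -- now the main estimate
  intro T hT
  have hAEnoise : ∀ᵐ ω ∂P, ∀ t : ℕ, 1 ≤ t → ‖g t ω - gradient L (Ξ t ω)‖ ≤ S := by
    rw [ae_all_iff]
    intro t
    by_cases ht : 1 ≤ t
    · filter_upwards [hnoise t ht] with ω h _
      exact h
    · filter_upwards with ω h
      exact absurd h ht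
  have key : ∀ᵐ ω ∂P, (∑ t ∈ Finset.Icc 1 T,
      ⟪gradient L (Ξ t ω), etaApply (dvec t) (gradient L (Ξ t ω))⟫)
      ≤ 2 * (L (Ξ 1 ω) - L (Ξ (T + 1) ω)) + (∑ t ∈ Finset.Icc 1 T, 2 * Yb t ω)
        + M * S ^ 2 * ∑ t ∈ Finset.Icc 1 T, (frobDiag (dvec t)) ^ 2 := by
    filter_upwards [hAEnoise] with ω hω
    have hstep : ∀ t ∈ Finset.Icc 1 T,
        ⟪gradient L (Ξ t ω), etaApply (dvec t) (gradient L (Ξ t ω))⟫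
          ≤ 2 * (L (Ξ t ω) - L (Ξ (t + 1) ω)) + 2 * Yb t ω
            + M * S ^ 2 * (frobDiag (dvec t)) ^ 2 := by
      intro t htm
      have ht1 : 1 ≤ t := (Finset.mem_Icc.mp htm).1
      have h := sgd_step L hL M hM hsmooth (dvec t) (hdnn t) (hdle t) S hS (Ξ t ω) (g t ω)
        (hω t ht1)
      rw [← hupdate t ht1 ω] at h
      have hYeq : (∑ i, (M * dvec t i ^ 2 - dvec t i)
          * (gradient L (Ξ t ω) i * (g t ω i - gradient L (Ξ t ω) i))) = Yb t ω := by
        rw [hYb]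
        exact Finset.sum_congr rfl fun i _ => by ring
      rw [hYeq] at h
      exact h
    calc (∑ t ∈ Finset.Icc 1 T,
        ⟪gradient L (Ξ t ω), etaApply (dvec t) (gradient L (Ξ t ω))⟫)
        ≤ ∑ t ∈ Finset.Icc 1 T, (2 * (L (Ξ t ω) - L (Ξ (t + 1) ω)) + 2 * Yb t ω
            + M * S ^ 2 * (frobDiag (dvec t)) ^ 2) := Finset.sum_le_sum hstep
      _ = (∑ t ∈ Finset.Icc 1 T, 2 * (L (Ξ t ω) - L (Ξ (t + 1) ω)))
          + (∑ t ∈ Finset.Icc 1 T, 2 * Yb t ω)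
          + ∑ t ∈ Finset.Icc 1 T, M * S ^ 2 * (frobDiag (dvec t)) ^ 2 := by
          rw [← Finset.sum_add_distrib, ← Finset.sum_add_distrib]
      _ = 2 * (L (Ξ 1 ω) - L (Ξ (T + 1) ω)) + (∑ t ∈ Finset.Icc 1 T, 2 * Yb t ω)
          + M * S ^ 2 * ∑ t ∈ Finset.Icc 1 T, (frobDiag (dvec t)) ^ 2 := by
          have h1 : (∑ t ∈ Finset.Icc 1 T, 2 * (L (Ξ t ω) - L (Ξ (t + 1) ω)))
              = 2 * (L (Ξ 1 ω) - L (Ξ (T + 1) ω)) := by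
            rw [← Finset.mul_sum, sgd_telescope (fun t => L (Ξ t ω)) T]
          have h2 : (∑ t ∈ Finset.Icc 1 T, M * S ^ 2 * (frobDiag (dvec t)) ^ 2)
              = M * S ^ 2 * ∑ t ∈ Finset.Icc 1 T, (frobDiag (dvec t)) ^ 2 := by
            rw [Finset.mul_sum]
          rw [h1, h2]
  -- integrate
  have hIntLHS : Integrable (fun ω => ∑ t ∈ Finset.Icc 1 T,
      ⟪gradient L (Ξ t ω), etaApply (dvec t) (gradient L (Ξ t ω))⟫) P :=
    integrable_finset_sum _ fun t htm => (hpack t (Finset.mem_Icc.mp htm).1).1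
  have hIntLdiff : Integrable (fun ω => L (Ξ 1 ω) - L (Ξ (T + 1) ω)) P :=
    ((hpack 1 le_rfl).2.1).sub ((hpack (T + 1) (by omega)).2.1)
  have hIntYsum : Integrable (fun ω => ∑ t ∈ Finset.Icc 1 T, 2 * Yb t ω) P :=
    integrable_finset_sum _ fun t htm =>
      ((hpack t (Finset.mem_Icc.mp htm).1).2.2.1).const_mul 2
  have hIntR : Integrable (fun ω => 2 * (L (Ξ 1 ω) - L (Ξ (T + 1) ω))
      + (∑ t ∈ Finset.Icc 1 T, 2 * Yb t ω)
      + M * S ^ 2 * ∑ t ∈ Finset.Icc 1 T, (frobDiag (dvec t)) ^ 2) P :=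
    ((hIntLdiff.const_mul 2).add hIntYsum).add (integrable_const _)
  have hle := integral_mono_ae hIntLHS hIntR key
  have hR : ∫ ω, (2 * (L (Ξ 1 ω) - L (Ξ (T + 1) ω))
      + (∑ t ∈ Finset.Icc 1 T, 2 * Yb t ω)
      + M * S ^ 2 * ∑ t ∈ Finset.Icc 1 T, (frobDiag (dvec t)) ^ 2) ∂P
      = 2 * (∫ ω, (L (Ξ 1 ω) - L (Ξ (T + 1) ω)) ∂P)
        + M * S ^ 2 * ∑ t ∈ Finset.Icc 1 T, (frobDiag (dvec t)) ^ 2 := by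
    have hIntR1 : Integrable (fun ω => 2 * (L (Ξ 1 ω) - L (Ξ (T + 1) ω))
        + (∑ t ∈ Finset.Icc 1 T, 2 * Yb t ω)) P := (hIntLdiff.const_mul 2).add hIntYsum
    rw [integral_add hIntR1 (integrable_const _),
      integral_add (hIntLdiff.const_mul 2) hIntYsum,
      integral_const_mul]
    have hYint0 : ∫ ω, (∑ t ∈ Finset.Icc 1 T, 2 * Yb t ω) ∂P = 0 := by
      rw [integral_finset_sum _ fun t htm =>
        ((hpack t (Finset.mem_Icc.mp htm).1).2.2.1).const_mul 2]
      refine Finset.sum_eq_zero fun t htm => ?_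
      rw [integral_const_mul, (hpack t (Finset.mem_Icc.mp htm).1).2.2.2]
      ring
    rw [hYint0, integral_const]
    simp
  rw [hR] at hle
  linarith
end
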